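/- Let F be strictly convex, let I ≠ ∅, and let S be convex. Suppose that for any x, y ∈ S with x ≠ y there exists i ∈ I such that L(x,y) ∩ Ω_i = ∅, and that for every x ∈ X the farthest projection P_F(x; Ω_i) is nonempty for all i ∈ I. Then the function C₂(x) := Σ_{i∈I} C_F(x; Ω_i) is strictly convex on S. -/

import Mathlib

open Set Pointwise Filter Topology Bornology Function

variable {X : Type*} [NormedAddCommGroup X] [NormedSpace ℝ X]

/-- The Minkowski gauge of `F`: `ρ_F(x) = inf {t ≥ 0 : x ∈ t • F}`. -/
noncomputable def rhoF (F : Set X) (x : X) : ℝ :=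
  sInf {t : ℝ | 0 ≤ t ∧ x ∈ t • F}

/-- The maximal time function `C_F(x; Q) = sup {ρ_F(q - x) : q ∈ Q}`. -/
noncomputable def maxTime (F Q : Set X) (x : X) : ℝ :=
  sSup ((fun q => rhoF F (q - x)) '' Q)

/-- The minimal time function `T_F(x; Θ) = inf {ρ_F(q - x) : q ∈ Θ}`. -/
noncomputable def minTime (F Θ : Set X) (x : X) : ℝ :=
  sInf ((fun q => rhoF F (q - x)) '' Θ)

/-- The farthest projection `P_F(x; Ω) = {ω ∈ Ω : ρ_F(ω - x) = C_F(x; Ω)}`. -/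
def farProj (F Ω : Set X) (x : X) : Set X :=
  {ω ∈ Ω | rhoF F (ω - x) = maxTime F Ω x}

/-- The line through `x` and `y`: `L(x,y) = {t•x + (1-t)•y : t ∈ ℝ}`. -/
def lineThrough (x y : X) : Set X :=
  {z : X | ∃ t : ℝ, z = t • x + (1 - t) • y}

lemma rhoF_eq_gauge {F : Set X} (hF0 : (0:X) ∈ F) (x : X) : rhoF F x = gauge F x := by
  rcases eq_or_ne x 0 with rfl | hx
  · rw [gauge_zero]
    refine le_antisymm (csInf_le ⟨0, fun t ht => ht.1⟩ ⟨le_refl 0, ?_⟩)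
      (le_csInf ⟨0, le_refl 0, ?_⟩ fun t ht => ht.1)
    · rw [zero_smul_set ⟨0, hF0⟩]; exact rfl
    · rw [zero_smul_set ⟨0, hF0⟩]; exact rfl
  · unfold rhoF gauge
    congr 1
    ext t
    refine ⟨fun ⟨h0, hm⟩ => ⟨?_, hm⟩, fun ⟨h0, hm⟩ => ⟨h0.le, hm⟩⟩
    rcases h0.lt_or_eq with h | h
    · exact h
    · exfalso
      rw [← h, zero_smul_set ⟨0, hF0⟩] at hm
      exact hx hm

lemma gauge_pos_of_ne_zero {F : Set X} (hFb : IsBounded F) (hF0 : (0:X) ∈ interior F)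
    {x : X} (hx : x ≠ 0) : 0 < gauge F x := by
  obtain ⟨R, hR0, hFR⟩ : ∃ R : ℝ, 0 < R ∧ F ⊆ Metric.closedBall 0 R := by
    obtain ⟨R, hFR⟩ := hFb.subset_closedBall (0 : X)
    exact ⟨max R 1, lt_of_lt_of_le one_pos (le_max_right _ _),
      hFR.trans (Metric.closedBall_subset_closedBall (le_max_left _ _))⟩
  have habs : Absorbent ℝ F := absorbent_nhds_zero (mem_interior_iff_mem_nhds.mp hF0)
  have := gauge_mono habs hFR x
  rw [gauge_closedBall hR0.le] at this
  exact lt_of_lt_of_le (div_pos (norm_pos_iff.mpr hx) hR0) this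

lemma mem_of_gauge_le_one {F : Set X} (hFc : IsClosed F) (hFconv : Convex ℝ F)
    (hF0 : (0:X) ∈ interior F) {x : X} (h : gauge F x ≤ 1) : x ∈ F := by
  have : F ∈ 𝓝 (0:X) := mem_interior_iff_mem_nhds.mp hF0
  rw [← hFc.closure_eq]
  exact (gauge_le_one_iff_mem_closure hFconv this).mp h

/-- Strict subadditivity of the gauge of a strictly convex set. -/
lemma gauge_add_lt {F : Set X} (hFc : IsClosed F) (hFb : IsBounded F) (hFconv : Convex ℝ F)
    (hF0 : (0:X) ∈ interior F) (hFs : StrictConvex ℝ F) {u v : X}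
    (hu : u ≠ 0) (hv : v ≠ 0) (hnp : ∀ c : ℝ, 0 < c → u ≠ c • v) :
    gauge F (u + v) < gauge F u + gauge F v := by
  have hFn : F ∈ 𝓝 (0:X) := mem_interior_iff_mem_nhds.mp hF0
  set a := gauge F u with ha
  set b := gauge F v with hb
  have ha0 : 0 < a := gauge_pos_of_ne_zero hFb hF0 hu
  have hb0 : 0 < b := gauge_pos_of_ne_zero hFb hF0 hv
  set p := a⁻¹ • u with hp
  set q := b⁻¹ • v with hq
  have hpF : p ∈ F := by
    apply mem_of_gauge_le_one hFc hFconv hF0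
    rw [hp, gauge_smul_of_nonneg (inv_nonneg.mpr ha0.le), smul_eq_mul,
      inv_mul_cancel₀ ha0.ne']
  have hqF : q ∈ F := by
    apply mem_of_gauge_le_one hFc hFconv hF0
    rw [hq, gauge_smul_of_nonneg (inv_nonneg.mpr hb0.le), smul_eq_mul,
      inv_mul_cancel₀ hb0.ne']
  have hpq : p ≠ q := by
    intro h
    apply hnp (a * b⁻¹) (mul_pos ha0 (inv_pos.mpr hb0))
    have : a • p = a • q := by rw [h]
    rw [hp, hq, smul_smul, mul_inv_cancel₀ ha0.ne', one_smul, smul_smul] at this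
    exact this
  have hab0 : 0 < a + b := add_pos ha0 hb0
  have hmem : (a / (a + b)) • p + (1 - a / (a + b)) • q ∈ interior F := by
    refine hFs hpF hqF hpq (div_pos ha0 hab0) (by
      rw [sub_pos, div_lt_one hab0]; linarith) (by ring)
  have hkey : (a + b)⁻¹ • (u + v) ∈ interior F := by
    have h1 : 1 - a / (a + b) = b / (a + b) := by field_simp; ring
    rw [h1, hp, hq, smul_smul, smul_smul, div_mul_eq_mul_div, mul_inv_cancel₀ ha0.ne',
      div_mul_eq_mul_div, mul_inv_cancel₀ hb0.ne'] at hmem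
    rw [smul_add]
    convert hmem using 2 <;> rw [one_div]
  have hlt : gauge F ((a + b)⁻¹ • (u + v)) < 1 :=
    (gauge_lt_one_iff_mem_interior hFconv hFn).mpr hkey
  rw [gauge_smul_of_nonneg (inv_nonneg.mpr hab0.le), smul_eq_mul] at hlt
  calc gauge F (u + v) = (a + b) * ((a + b)⁻¹ * gauge F (u + v)) := by
        rw [← mul_assoc, mul_inv_cancel₀ hab0.ne', one_mul]
    _ < (a + b) * 1 := mul_lt_mul_of_pos_left hlt hab0
    _ = a + b := mul_one _

/-- Proposition 3.11. -/
theorem stmt16 {ι : Type*} (F : Set X) (I : Finset ι) (Ω : ι → Set X) (S : Set X)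
    (hFc : IsClosed F) (hFb : IsBounded F) (hFconv : Convex ℝ F)
    (hF0 : (0 : X) ∈ interior F) (hFs : StrictConvex ℝ F)
    (hΩne : ∀ i ∈ I, (Ω i).Nonempty) (hΩc : ∀ i ∈ I, IsClosed (Ω i))
    (hΩb : ∀ i ∈ I, IsBounded (Ω i))
    (hSne : S.Nonempty) (hSc : IsClosed S) (hSconv : Convex ℝ S)
    (hI : I.Nonempty)
    (hline : ∀ x ∈ S, ∀ y ∈ S, x ≠ y → ∃ i ∈ I, lineThrough x y ∩ Ω i = ∅)
    (hP : ∀ x : X, ∀ i ∈ I, (farProj F (Ω i) x).Nonempty) :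
    StrictConvexOn ℝ S (fun x => ∑ i ∈ I, maxTime F (Ω i) x) := by
  have hF0' : (0:X) ∈ F := interior_subset hF0
  have hFn : F ∈ 𝓝 (0:X) := mem_interior_iff_mem_nhds.mp hF0
  have habs : Absorbent ℝ F := absorbent_nhds_zero hFn
  obtain ⟨r, hr0, hrF⟩ : ∃ r : ℝ, 0 < r ∧ Metric.ball (0:X) r ⊆ F := by
    obtain ⟨r, hr0, hrF⟩ := Metric.mem_nhds_iff.mp hFn
    exact ⟨r, hr0, hrF⟩
  have hbdd : ∀ i ∈ I, ∀ x : X, BddAbove ((fun q => rhoF F (q - x)) '' (Ω i)) := by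
    intro i hi x
    obtain ⟨M, hM⟩ := (hΩb i hi).exists_norm_le
    refine ⟨(M + ‖x‖) / r, ?_⟩
    rintro _ ⟨q, hq, rfl⟩
    show rhoF F (q - x) ≤ (M + ‖x‖) / r
    rw [rhoF_eq_gauge hF0']
    have h1 : r * gauge F (q - x) ≤ ‖q - x‖ := mul_gauge_le_norm hrF
    have h2 : ‖q - x‖ ≤ M + ‖x‖ :=
      (norm_sub_le _ _).trans (add_le_add_left (hM q hq) _)
    rw [le_div_iff₀ hr0, mul_comm]
    exact h1.trans h2
  have hle : ∀ i ∈ I, ∀ x : X, ∀ q ∈ Ω i, gauge F (q - x) ≤ maxTime F (Ω i) x := by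
    intro i hi x q hq
    rw [← rhoF_eq_gauge hF0']
    exact le_csSup (hbdd i hi x) (mem_image_of_mem _ hq)
  have hnn : ∀ i ∈ I, ∀ x : X, 0 ≤ maxTime F (Ω i) x := by
    intro i hi x
    obtain ⟨q, hq⟩ := hΩne i hi
    exact le_trans (gauge_nonneg _) (hle i hi x q hq)
  refine ⟨hSconv, fun x hx y hy hxy a b ha hb hab => ?_⟩
  obtain ⟨i₀, hi₀, hd⟩ := hline x hx y hy hxy
  set z := a • x + b • y with hz
  -- non-strict inequality for every i
  have hles : ∀ i ∈ I,
      maxTime F (Ω i) z ≤ a * maxTime F (Ω i) x + b * maxTime F (Ω i) y := by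
    intro i hi
    apply Real.sSup_le
    · rintro _ ⟨q, hq, rfl⟩
      show rhoF F (q - z) ≤ _
      rw [rhoF_eq_gauge hF0']
      have hsplit : q - z = a • (q - x) + b • (q - y) := by
        have : a • (q - x) + b • (q - y) = (a + b) • q - z := by rw [hz]; module
        rw [this, hab, one_smul]
      calc gauge F (q - z) ≤ gauge F (a • (q - x)) + gauge F (b • (q - y)) := by
            rw [hsplit]; exact gauge_add_le hFconv habs _ _
        _ = a * gauge F (q - x) + b * gauge F (q - y) := by
            rw [gauge_smul_of_nonneg ha.le, gauge_smul_of_nonneg hb.le,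
              smul_eq_mul, smul_eq_mul]
        _ ≤ a * maxTime F (Ω i) x + b * maxTime F (Ω i) y :=
            add_le_add (mul_le_mul_of_nonneg_left (hle i hi x q hq) ha.le)
              (mul_le_mul_of_nonneg_left (hle i hi y q hq) hb.le)
    · exact add_nonneg (mul_nonneg ha.le (hnn i hi x)) (mul_nonneg hb.le (hnn i hi y))
  -- strict inequality for i₀
  have hstrict : maxTime F (Ω i₀) z < a * maxTime F (Ω i₀) x + b * maxTime F (Ω i₀) y := by
    obtain ⟨ω, hωΩ, hωeq⟩ := hP z i₀ hi₀
    have hωnotline : ω ∉ lineThrough x y := fun hmem =>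
      (eq_empty_iff_forall_notMem.mp hd ω) ⟨hmem, hωΩ⟩
    have hωx : ω ≠ x := fun h => hωnotline ⟨1, by simp [h]⟩
    have hωy : ω ≠ y := fun h => hωnotline ⟨0, by simp [h]⟩
    have hu : a • (ω - x) ≠ 0 := smul_ne_zero ha.ne' (sub_ne_zero.mpr hωx)
    have hv : b • (ω - y) ≠ 0 := smul_ne_zero hb.ne' (sub_ne_zero.mpr hωy)
    have hnp : ∀ c : ℝ, 0 < c → a • (ω - x) ≠ c • (b • (ω - y)) := by
      intro c hc heq
      set μ := a⁻¹ * (c * b) with hμ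
      have hpar : ω - x = μ • (ω - y) := by
        have := congrArg (fun w => a⁻¹ • w) heq
        simpa [smul_smul, inv_mul_cancel₀ ha.ne', hμ, mul_assoc] using this
      rcases eq_or_ne μ 1 with h1 | h1
      · rw [h1, one_smul, sub_right_inj] at hpar
        exact hxy hpar
      · apply hωnotline
        have h1μ : (1 : ℝ) - μ ≠ 0 := sub_ne_zero.mpr (Ne.symm h1)
        set s := ((1:ℝ) - μ)⁻¹ with hs
        have hss : s * (1 - μ) = 1 := inv_mul_cancel₀ h1μ
        refine ⟨s, ?_⟩
        have hkey : (1 - μ) • ω = x - μ • y := by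
          linear_combination (norm := module) hpar
        have h1s : 1 - s = -(s * μ) := by linear_combination -hss
        calc ω = (s * (1 - μ)) • ω := by rw [hss, one_smul]
          _ = s • ((1 - μ) • ω) := by rw [mul_smul]
          _ = s • (x - μ • y) := by rw [hkey]
          _ = s • x + (1 - s) • y := by rw [h1s]; module
    have hsplit : ω - z = a • (ω - x) + b • (ω - y) := by
      have : a • (ω - x) + b • (ω - y) = (a + b) • ω - z := by rw [hz]; module
      rw [this, hab, one_smul]
    have heq : maxTime F (Ω i₀) z = gauge F (ω - z) := by
      rw [← hωeq, rhoF_eq_gauge hF0']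
    rw [heq, hsplit]
    calc gauge F (a • (ω - x) + b • (ω - y))
        < gauge F (a • (ω - x)) + gauge F (b • (ω - y)) :=
          gauge_add_lt hFc hFb hFconv hF0 hFs hu hv hnp
      _ = a * gauge F (ω - x) + b * gauge F (ω - y) := by
          rw [gauge_smul_of_nonneg ha.le, gauge_smul_of_nonneg hb.le, smul_eq_mul, smul_eq_mul]
      _ ≤ a * maxTime F (Ω i₀) x + b * maxTime F (Ω i₀) y :=
          add_le_add (mul_le_mul_of_nonneg_left (hle i₀ hi₀ x ω hωΩ) ha.le)
            (mul_le_mul_of_nonneg_left (hle i₀ hi₀ y ω hωΩ) hb.le)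
  have hsum : ∑ i ∈ I, maxTime F (Ω i) z
      < ∑ i ∈ I, (a * maxTime F (Ω i) x + b * maxTime F (Ω i) y) :=
    Finset.sum_lt_sum hles ⟨i₀, hi₀, hstrict⟩
  simp only [smul_eq_mul]
  calc ∑ i ∈ I, maxTime F (Ω i) z
      < ∑ i ∈ I, (a * maxTime F (Ω i) x + b * maxTime F (Ω i) y) := hsum
    _ = a * ∑ i ∈ I, maxTime F (Ω i) x + b * ∑ i ∈ I, maxTime F (Ω i) y := by
        rw [Finset.sum_add_distrib, Finset.mul_sum, Finset.mul_sum]
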